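/- For integers a ≥ b ≥ c ≥ 0 with a, b, c all even and with empty 2-core (which holds automatically in this parity case): the Schur polynomial satisfies s_{(a,b,c)}(x, -x, y) = s_{(a/2, c/2)}(x², y²) · s_{(b/2)}(x²). -/
import Mathlib


/-- Schur polynomial in 3 variables via the bialternant formula
`det(v_i^{μ_j + 3 - j}) / det(v_i^{3 - j})` (1-indexed `j`). -/
noncomputable def schur3 {F : Type*} [Field F] (μ : Fin 3 → ℕ) (v : Fin 3 → F) : F :=
  Matrix.det (Matrix.of fun i j : Fin 3 => v i ^ (μ j + (2 - (j : ℕ)))) /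
    Matrix.det (Matrix.of fun i j : Fin 3 => v i ^ (2 - (j : ℕ)))

/-- Schur polynomial in 2 variables via the bialternant formula. -/
noncomputable def schur2 {F : Type*} [Field F] (μ : Fin 2 → ℕ) (v : Fin 2 → F) : F :=
  Matrix.det (Matrix.of fun i j : Fin 2 => v i ^ (μ j + (1 - (j : ℕ)))) /
    Matrix.det (Matrix.of fun i j : Fin 2 => v i ^ (1 - (j : ℕ)))

/-- for `a ≥ b ≥ c ≥ 0` all even (empty 2-core),
`s_{(a,b,c)}(x,-x,y) = s_{(a/2,c/2)}(x²,y²) · s_{(b/2)}(x²)`. -/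
theorem schur_spec_even {F : Type*} [Field F] (x y : F) (h2 : (2 : F) ≠ 0)
    (hx : x ≠ 0) (hxy : x ≠ y) (hxy' : x ≠ -y)
    (a b c : ℕ) (hab : b ≤ a) (hbc : c ≤ b)
    (ha : Even a) (hb : Even b) (hc : Even c) :
    schur3 ![a, b, c] ![x, -x, y] =
      schur2 ![a / 2, c / 2] ![x ^ 2, y ^ 2] * (x ^ 2) ^ (b / 2) := by
  obtain ⟨a', rfl⟩ := ha
  obtain ⟨b', rfl⟩ := hb
  obtain ⟨c', rfl⟩ := hc
  simp only [schur3, schur2, Matrix.det_fin_three, Matrix.det_fin_two, Matrix.of_apply,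
    Matrix.cons_val', Matrix.cons_val_zero, Matrix.cons_val_one, Matrix.head_cons,
    Matrix.empty_val', Matrix.cons_val_fin_one, Matrix.cons_val_two, Matrix.tail_cons,
    Fin.isValue, Fin.val_zero, Fin.val_one, Fin.val_two]
  norm_num
  have hdiv : ∀ n : ℕ, (n + n) / 2 = n := fun n => by omega
  have hpa : (-x) ^ (a' + a' + 2) = x ^ (a' + a' + 2) := Even.neg_pow ⟨a' + 1, by ring⟩ x
  have hpb : (-x) ^ (b' + b' + 1) = -(x ^ (b' + b' + 1)) := Odd.neg_pow ⟨b', by ring⟩ x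
  have hsub : x - y ≠ 0 := sub_ne_zero.mpr hxy
  have hadd : x + y ≠ 0 := fun h => hxy' (eq_neg_of_add_eq_zero_left h)
  have hDl : (-(x ^ 2 * x) - x ^ 2 * y - x * x ^ 2 + x * y ^ 2 + x ^ 2 * y + x * y ^ 2) ≠ 0 := by
    have : (-(x ^ 2 * x) - x ^ 2 * y - x * x ^ 2 + x * y ^ 2 + x ^ 2 * y + x * y ^ 2)
        = -2 * x * ((x - y) * (x + y)) := by ring
    rw [this]
    exact mul_ne_zero (mul_ne_zero (neg_ne_zero.mpr h2) hx) (mul_ne_zero hsub hadd)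
  have hD2 : x ^ 2 - y ^ 2 ≠ 0 := by
    have : x ^ 2 - y ^ 2 = (x - y) * (x + y) := by ring
    rw [this]; exact mul_ne_zero hsub hadd
  simp only [hdiv, hpa, hpb]
  rw [div_mul_eq_mul_div, div_eq_div_iff hDl hD2]
  ring
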